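/- arXiv:1609.01807 — 2 statements merged into one kernel-verified Lean document; each statement's English description precedes it below -/
import Mathlib

section
/- Let Z be a nonnegative (or integrable) random variable and N an independent auxiliary index with pmf (p_n). Suppose for each n, Z_loc(n) is an unbiased estimator of q_n − q_{n-1} where q_n → L and ∑_n |q_n − q_{n-1}| < ∞. Then the estimator Z = Z_loc(N)/p_N satisfies E[Z] = L. -/
open MeasureTheory ProbabilityTheory Filter

/-- Unbiasedness of the randomized multilevel estimator: if `Z_loc n` has mean
`q_n − q_{n-1}` with `∑ E|Z_loc n| < ∞`, `q_n → L`, and `N` is an independent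
index with `P(N = n) = p_n > 0`, then `E[Z_loc(N)/p_N] = L`. -/
theorem unbiased_randomized_estimator
    {Ω : Type*} [MeasurableSpace Ω] (P : Measure Ω) [IsProbabilityMeasure P]
    (Zloc : ℕ → Ω → ℝ) (hZmeas : ∀ n, Measurable (Zloc n))
    (N : Ω → ℕ) (hN : Measurable N) (hN1 : ∀ ω, 1 ≤ N ω)
    (hindep : ∀ n, IndepFun N (Zloc n) P)
    (p : ℕ → ℝ) (hp : ∀ n, 1 ≤ n → 0 < p n)
    (hlaw : ∀ n, 1 ≤ n → (P {ω | N ω = n}).toReal = p n)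
    (q : ℕ → ℝ) (hq0 : q 0 = 0) (L : ℝ)
    (hlim : Tendsto q atTop (nhds L))
    (hmean : ∀ n, 1 ≤ n → ∫ ω, Zloc n ω ∂P = q n - q (n - 1))
    (hint : ∀ n, Integrable (Zloc n) P)
    (habs : Summable (fun n : ℕ => ∫ ω, |Zloc n ω| ∂P)) :
    ∫ ω, Zloc (N ω) ω / p (N ω) ∂P = L := by
  classical
  set A : ℕ → Set Ω := fun n => {ω | N ω = n} with hA
  have hAmeas : ∀ n, MeasurableSet (A n) := fun n => hN (measurableSet_singleton n)
  have hA0 : A 0 = ∅ := by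
    ext ω; simp only [A, Set.mem_setOf_eq, Set.mem_empty_iff_false, iff_false]
    exact fun h => absurd (h ▸ hN1 ω) (by norm_num)
  set f : ℕ → Ω → ℝ := fun n => (A n).indicator (fun ω => Zloc n ω / p n) with hf
  have hfint : ∀ n, Integrable (f n) P := fun n =>
    ((hint n).div_const (p n)).indicator (hAmeas n)
  -- key: integral of indicator times independent function
  have key : ∀ (n : ℕ) (h : Ω → ℝ), Measurable h → IndepFun N h P →
      ∫ ω, (A n).indicator h ω ∂P = (P (A n)).toReal * ∫ ω, h ω ∂P := by
    intro n h hmeas hind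
    have heq : (A n).indicator h =
        (fun ω => (if N ω = n then (1:ℝ) else 0) * h ω) := by
      funext ω
      by_cases hω : N ω = n
      · simp [Set.indicator_of_mem, A, Set.mem_setOf_eq, hω]
      · simp [Set.indicator_of_notMem, A, Set.mem_setOf_eq, hω]
    have hind2 : IndepFun (fun ω => (if N ω = n then (1:ℝ) else 0)) h P := by
      have := hind.comp (φ := fun m : ℕ => if m = n then (1:ℝ) else 0)
        (ψ := id) Measurable.of_discrete measurable_id
      exact this
    have hmul := IndepFun.integral_fun_mul_eq_mul_integral hind2
      (by
        have : Measurable (fun ω => (if N ω = n then (1:ℝ) else 0)) :=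
          (Measurable.of_discrete (f := fun m : ℕ => if m = n then (1:ℝ) else 0)).comp hN
        exact this.aestronglyMeasurable)
      hmeas.aestronglyMeasurable
    have hid : ∫ ω, (if N ω = n then (1:ℝ) else 0) ∂P = (P (A n)).toReal := by
      have : (fun ω => (if N ω = n then (1:ℝ) else 0)) =
          (A n).indicator (fun _ => (1:ℝ)) := by
        funext ω
        by_cases hω : N ω = n
        · simp [A, Set.indicator_of_mem, Set.mem_setOf_eq, hω]
        · simp [A, Set.indicator_of_notMem, Set.mem_setOf_eq, hω]
      rw [this, integral_indicator_const _ (hAmeas n)]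
      simp [Measure.real]
    calc ∫ ω, (A n).indicator h ω ∂P = ∫ ω, (if N ω = n then (1:ℝ) else 0) * h ω ∂P := by
          rw [heq]
      _ = (∫ ω, (if N ω = n then (1:ℝ) else 0) ∂P) * ∫ ω, h ω ∂P := hmul
      _ = (P (A n)).toReal * ∫ ω, h ω ∂P := by rw [hid]
  -- integrals of f n
  have hfval : ∀ n, ∫ ω, f n ω ∂P = if n = 0 then 0 else q n - q (n - 1) := by
    intro n
    rcases Nat.eq_zero_or_pos n with rfl | hn
    · simp [f, hA0]
    · have hind : IndepFun N (fun ω => Zloc n ω / p n) P :=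
        (hindep n).comp (φ := id) (ψ := fun x => x / p n) measurable_id
          (measurable_id.div_const _)
      rw [hf]
      rw [key n _ ((hZmeas n).div_const _) hind, hlaw n hn, integral_div, hmean n hn]
      have hpn := (hp n hn).ne'
      have hn0 : n ≠ 0 := Nat.one_le_iff_ne_zero.mp hn
      rw [if_neg hn0]
      field_simp
  -- norm integrals
  have hfnorm : ∀ n, ∫ ω, ‖f n ω‖ ∂P = if n = 0 then 0 else ∫ ω, |Zloc n ω| ∂P := by
    intro n
    rcases Nat.eq_zero_or_pos n with rfl | hn
    · simp [f, hA0]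
    · have habsind : IndepFun N (fun ω => |Zloc n ω| / p n) P :=
        (hindep n).comp (φ := id) (ψ := fun x => |x| / p n) measurable_id
          (measurable_abs.div_const _)
      have hnormeq : ∀ ω, ‖f n ω‖ = (A n).indicator (fun ω => |Zloc n ω| / p n) ω := by
        intro ω
        by_cases hω : ω ∈ A n
        · simp only [f, Set.indicator_of_mem hω]
          rw [Real.norm_eq_abs, abs_div, abs_of_pos (hp n hn)]
        · simp [f, Set.indicator_of_notMem hω]
      rw [integral_congr_ae (Filter.Eventually.of_forall hnormeq)]
      rw [key n _ ((hZmeas n).abs.div_const _) habsind, hlaw n hn, integral_div]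
      have hpn := (hp n hn).ne'
      field_simp
      simp [Nat.one_le_iff_ne_zero.mp hn]
  have hsumnorm : Summable (fun n => ∫ ω, ‖f n ω‖ ∂P) := by
    apply Summable.of_nonneg_of_le (fun n => integral_nonneg (fun ω => norm_nonneg _))
      (fun n => ?_) habs
    rw [hfnorm n]
    split_ifs with h
    · exact integral_nonneg fun ω => abs_nonneg _
    · exact le_refl _
  -- pointwise identity
  have hpt : ∀ ω, Zloc (N ω) ω / p (N ω) = ∑' n, f n ω := by
    intro ω
    rw [tsum_eq_single (N ω) (fun m hm => by
      simp only [f]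
      exact Set.indicator_of_notMem (fun h => hm (h.symm)) _)]
    simp only [f]
    rw [Set.indicator_of_mem (by simp [A])]
  calc ∫ ω, Zloc (N ω) ω / p (N ω) ∂P = ∫ ω, ∑' n, f n ω ∂P := by
        exact integral_congr_ae (Filter.Eventually.of_forall hpt)
    _ = ∑' n, ∫ ω, f n ω ∂P :=
        (integral_tsum_of_summable_integral_norm hfint hsumnorm).symm
    _ = L := by
        set s : ℕ → ℝ := fun n => ∫ ω, f n ω ∂P with hs
        have hssum : Summable s := by
          apply Summable.of_norm
          apply Summable.of_nonneg_of_le (fun n => norm_nonneg _)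
            (fun n => norm_integral_le_integral_norm _) hsumnorm
        have hpartial : ∀ M, ∑ i ∈ Finset.range (M + 1), s i = q M := by
          intro M
          induction M with
          | zero => simp [s, hfval, hq0]
          | succ M ih =>
            rw [Finset.sum_range_succ, ih]
            have h := hfval (M + 1)
            simp only [hs]
            rw [h]
            simp
        have h1 : Tendsto (fun M => ∑ i ∈ Finset.range (M + 1), s i) atTop
            (nhds (∑' n, s n)) :=
          hssum.hasSum.tendsto_sum_nat.comp (tendsto_add_atTop_nat 1)
        have h2 : Tendsto (fun M => ∑ i ∈ Finset.range (M + 1), s i) atTop (nhds L) := by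
          simpa only [funext hpartial] using hlim
        exact tendsto_nhds_unique h1 h2
end

section
/- Let X be a real random variable with E[X] = 0 and E[|X|^κ] < ∞ for some κ ∈ (1,2]. Then for any θ > 0, γ > 0, E[e^{θX} · 1{X ≤ γ/θ}] ≤ 1 + c·θ^κ where c = e^γ E[|X|^κ]. -/
open MeasureTheory

lemma key_pointwise (κ x y : ℝ) (hκ1 : 1 ≤ κ) (hκ2 : κ ≤ 2) (hxy : x ≤ y) (hy : 0 ≤ y) :
    Real.exp x ≤ 1 + x + |x| ^ κ * Real.exp y := by
  have hey : (1:ℝ) ≤ Real.exp y := Real.one_le_exp hy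
  have hepos : (0:ℝ) < Real.exp y := Real.exp_pos y
  rcases le_or_gt 1 x with h1 | h1
  · have habs : (1:ℝ) ≤ |x| ^ κ :=
      Real.one_le_rpow (by rw [abs_of_nonneg (by linarith)]; linarith) (by linarith)
    have hxx : Real.exp x ≤ Real.exp y := Real.exp_le_exp.mpr hxy
    nlinarith
  · rcases le_or_gt x (-1) with h2 | h2
    · have hex : Real.exp x ≤ 1 := Real.exp_le_one_iff.mpr (by linarith)
      have habs1 : (1:ℝ) ≤ |x| := by rw [abs_of_nonpos (by linarith)]; linarith
      have habs : |x| ≤ |x| ^ κ := by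
        calc |x| = |x| ^ (1:ℝ) := (Real.rpow_one _).symm
        _ ≤ |x| ^ κ := Real.rpow_le_rpow_of_exponent_le habs1 hκ1
      have hxabs : -x = |x| := (abs_of_nonpos (by linarith)).symm
      have h0 : (0:ℝ) ≤ |x| ^ κ := Real.rpow_nonneg (abs_nonneg x) κ
      nlinarith
    · -- -1 < x < 1
      rcases eq_or_ne x 0 with rfl | hx0
      · rw [abs_zero, Real.zero_rpow (by linarith)]
        simp
      have hb : |x| ≤ 1 := abs_le.mpr ⟨le_of_lt h2, le_of_lt h1⟩
      have hbd := Real.exp_bound hb (n := 2) (by norm_num)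
      have hsum : ∑ m ∈ Finset.range 2, x ^ m / m.factorial = 1 + x := by
        simp [Finset.sum_range_succ]
      rw [hsum] at hbd
      norm_num [Nat.factorial] at hbd
      have hexp2 : Real.exp x ≤ 1 + x + |x| ^ 2 := by
        have h := (abs_sub_le_iff.1 hbd).1
        nlinarith [sq_nonneg x, sq_abs x, abs_nonneg x]
      have hsq : |x| ^ (2:ℝ) ≤ |x| ^ κ :=
        Real.rpow_le_rpow_of_exponent_ge (abs_pos.mpr hx0) hb hκ2
      have hsq' : |x| ^ (2:ℝ) = |x| ^ 2 := by
        rw [show (2:ℝ) = ((2:ℕ):ℝ) by norm_num, Real.rpow_natCast]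
      rw [hsq'] at hsq
      have h0 : (0:ℝ) ≤ |x| ^ κ := Real.rpow_nonneg (abs_nonneg x) κ
      nlinarith

lemma key_nonneg (κ x y : ℝ) (hκ1 : 1 ≤ κ) (hy : 0 ≤ y) :
    0 ≤ 1 + x + |x| ^ κ * Real.exp y := by
  have hey : (1:ℝ) ≤ Real.exp y := Real.one_le_exp hy
  have h0 : (0:ℝ) ≤ |x| ^ κ := Real.rpow_nonneg (abs_nonneg x) κ
  rcases le_or_gt (-1) x with h1 | h1
  · nlinarith
  · have habs1 : (1:ℝ) ≤ |x| := by rw [abs_of_nonpos (by linarith)]; linarith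
    have habs : |x| ≤ |x| ^ κ := by
      calc |x| = |x| ^ (1:ℝ) := (Real.rpow_one _).symm
      _ ≤ |x| ^ κ := Real.rpow_le_rpow_of_exponent_le habs1 hκ1
    have hxabs : -x = |x| := (abs_of_nonpos (by linarith)).symm
    nlinarith

/-- Truncated exponential moment bound: if `E[X] = 0` and `E[|X|^κ] < ∞` for
some `κ ∈ (1,2]`, then for any `θ > 0`, `γ > 0`,
`E[e^{θX} · 1{X ≤ γ/θ}] ≤ 1 + c θ^κ` with `c = e^γ E[|X|^κ]`. -/
theorem truncated_exp_moment_bound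
    {Ω : Type*} [MeasurableSpace Ω] (P : Measure Ω) [IsProbabilityMeasure P]
    (X : Ω → ℝ) (hX : Measurable X) (hint : Integrable X P)
    (hmean : ∫ ω, X ω ∂P = 0)
    (κ : ℝ) (hκ1 : 1 < κ) (hκ2 : κ ≤ 2)
    (hκmom : Integrable (fun ω => |X ω| ^ κ) P)
    (θ γ : ℝ) (hθ : 0 < θ) (hγ : 0 < γ) :
    ∫ ω in {ω | X ω ≤ γ / θ}, Real.exp (θ * X ω) ∂P ≤
      1 + (Real.exp γ * ∫ ω, |X ω| ^ κ ∂P) * θ ^ κ := by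
  set A : Set Ω := {ω | X ω ≤ γ / θ} with hA
  have hmeasA : MeasurableSet A := measurableSet_le hX measurable_const
  set f : Ω → ℝ := fun ω => 1 + θ * X ω + θ ^ κ * |X ω| ^ κ * Real.exp γ with hf
  have habsκ : ∀ ω, |θ * X ω| ^ κ = θ ^ κ * |X ω| ^ κ := fun ω => by
    rw [abs_mul, abs_of_pos hθ, Real.mul_rpow hθ.le (abs_nonneg _)]
  have hpt : ∀ ω ∈ A, Real.exp (θ * X ω) ≤ f ω := by
    intro ω hω
    have hxy : θ * X ω ≤ γ := by
      have h := hω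
      simp only [hA, Set.mem_setOf_eq] at h
      rw [le_div_iff₀ hθ] at h; linarith
    have := key_pointwise κ (θ * X ω) γ hκ1.le hκ2 hxy hγ.le
    rwa [habsκ ω] at this
  have hfnn : ∀ ω, 0 ≤ f ω := by
    intro ω
    have := key_nonneg κ (θ * X ω) γ hκ1.le hγ.le
    rwa [habsκ ω] at this
  have hfint : Integrable f P := by
    apply Integrable.add
    · exact (integrable_const 1).add (hint.const_mul θ)
    · exact (hκmom.const_mul (θ ^ κ)).mul_const (Real.exp γ)
  have hexpint : IntegrableOn (fun ω => Real.exp (θ * X ω)) A P := by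
    apply Integrable.mono' hfint.integrableOn
    · exact (Real.measurable_exp.comp (hX.const_mul θ)).aestronglyMeasurable
    · filter_upwards [ae_restrict_mem hmeasA] with ω hω
      rw [Real.norm_eq_abs, abs_of_pos (Real.exp_pos _)]
      exact hpt ω hω
  have h1 : ∫ ω in A, Real.exp (θ * X ω) ∂P ≤ ∫ ω in A, f ω ∂P :=
    setIntegral_mono_on hexpint hfint.integrableOn hmeasA hpt
  have h2 : ∫ ω in A, f ω ∂P ≤ ∫ ω, f ω ∂P :=
    setIntegral_le_integral hfint (ae_of_all _ hfnn)
  have h3 : ∫ ω, f ω ∂P = 1 + (Real.exp γ * ∫ ω, |X ω| ^ κ ∂P) * θ ^ κ := by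
    have hI1 : Integrable (fun ω => 1 + θ * X ω) P := (integrable_const 1).add (hint.const_mul θ)
    have hI2 : Integrable (fun ω => θ ^ κ * |X ω| ^ κ * Real.exp γ) P :=
      (hκmom.const_mul (θ ^ κ)).mul_const (Real.exp γ)
    calc ∫ ω, f ω ∂P
        = (∫ ω, (1 + θ * X ω) ∂P) + ∫ ω, θ ^ κ * |X ω| ^ κ * Real.exp γ ∂P :=
          integral_add hI1 hI2
      _ = ((∫ ω, (1:ℝ) ∂P) + ∫ ω, θ * X ω ∂P) + θ ^ κ * (∫ ω, |X ω| ^ κ ∂P) * Real.exp γ := by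
          rw [integral_add (integrable_const 1) (hint.const_mul θ), integral_mul_const,
            integral_const_mul, integral_const_mul]
      _ = 1 + (Real.exp γ * ∫ ω, |X ω| ^ κ ∂P) * θ ^ κ := by
          rw [integral_const_mul, hmean, integral_const]
          simp [measure_univ]
          ring
  linarith [h1, h2, h3.le, h3.ge]
end
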